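/- If G is a super edge-magic graph with p ≥ 4 vertices and q edges, where q = 2p − 3 or q = 2p − 4, then G contains a triangle (a cycle of length 3). -/

import Mathlib

/-- `f` is an edge-magic labeling of the graph `G` with valence `k`:
`f` is a bijection from `V(G) ∪ E(G)` onto `{1, …, p + q}` and
`f u + f v + f uv = k` for every edge `uv`. -/
def IsEdgeMagic {V : Type*} [Fintype V] (G : SimpleGraph V)
    (f : V ⊕ G.edgeSet → ℕ) (k : ℕ) : Prop :=
  Set.BijOn f Set.univ (Set.Icc 1 (Fintype.card V + G.edgeSet.ncard)) ∧
  ∀ u v, ∀ h : G.Adj u v,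
    f (Sum.inl u) + f (Sum.inl v) + f (Sum.inr ⟨s(u, v), G.mem_edgeSet.mpr h⟩) = k

/-- `f` is a super edge-magic labeling of `G` with valence `k`: an edge-magic
labeling whose vertex labels are exactly `{1, …, p}`. -/
def IsSuperEdgeMagic {V : Type*} [Fintype V] (G : SimpleGraph V)
    (f : V ⊕ G.edgeSet → ℕ) (k : ℕ) : Prop :=
  IsEdgeMagic G f k ∧ ∀ v, f (Sum.inl v) ∈ Set.Icc 1 (Fintype.card V)

/-- Core combinatorial lemma: if for every sum `s ∈ [3, p+2]` there is an
"edge" `{a,b}` with `1 ≤ a < b ≤ p` and `a + b = s`, then there is a triangle. -/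
lemma core_tri (p : ℕ) (hp : 4 ≤ p) (A : ℕ → ℕ → Prop)
    (hE : ∀ s, 3 ≤ s → s ≤ p + 2 →
      ∃ a b, 1 ≤ a ∧ a < b ∧ b ≤ p ∧ a + b = s ∧ A a b) :
    ∃ a b c, A a b ∧ A b c ∧ A a c := by
  have aux : ∀ m, 2 ≤ m → m ≤ p →
      (∃ a b c, A a b ∧ A b c ∧ A a c) ∨ (∀ j, 2 ≤ j → j ≤ m → A 1 j) := by
    intro m
    induction m with
    | zero => intro h; exact absurd h (by omega)
    | succ n ih =>
      intro h2 hp'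
      by_cases hn : 2 ≤ n
      · rcases ih hn (by omega) with tri | hall
        · exact Or.inl tri
        · obtain ⟨a, b, ha, hab, hbp, hs, hA⟩ := hE (n + 2) (by omega) (by omega)
          by_cases ha1 : a = 1
          · right
            intro j hj2 hjn
            rcases Nat.lt_or_ge j (n + 1) with hj | hj
            · exact hall j hj2 (by omega)
            · have hj' : j = n + 1 := by omega
              have hb : b = n + 1 := by omega
              subst hj'; subst hb; subst ha1
              exact hA
          · left
            have ha2 : 2 ≤ a := by omega
            have hb : b ≤ n := by omega
            exact ⟨1, a, b, hall a ha2 (by omega), hA, hall b (by omega) hb⟩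
      · have hn1 : n = 1 := by omega
        right
        intro j hj2 hjn
        have hj : j = 2 := by omega
        obtain ⟨a, b, ha, hab, hbp, hs, hA⟩ := hE 3 le_rfl (by omega)
        have ha1 : a = 1 := by omega
        have hb2 : b = 2 := by omega
        subst hj; subst ha1; subst hb2
        exact hA
  rcases aux p (by omega) le_rfl with tri | hall
  · exact tri
  · obtain ⟨a, b, ha, hab, hbp, hs, hA⟩ := hE (p + 2) (by omega) le_rfl
    have ha2 : 2 ≤ a := by omega
    exact ⟨1, a, b, hall a ha2 (by omega), hA, hall b (by omega) hbp⟩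

/-- If `G` is a super edge-magic graph with `p ≥ 4` vertices and `q` edges,
where `q = 2p - 3` or `q = 2p - 4`, then `G` contains a triangle. -/
theorem stmt_2 {V : Type*} [Fintype V] (G : SimpleGraph V) (p q : ℕ)
    (hp : Fintype.card V = p) (hq : G.edgeSet.ncard = q) (hp4 : 4 ≤ p)
    (hqval : q = 2 * p - 3 ∨ q = 2 * p - 4)
    (hG : ∃ f k, IsSuperEdgeMagic G f k) :
    ∃ a b c : V, G.Adj a b ∧ G.Adj b c ∧ G.Adj a c := by
  subst hp; subst hq
  set p := Fintype.card V with hp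
  set q := G.edgeSet.ncard with hq
  obtain ⟨f, k, ⟨⟨hbij, hmagic⟩, hvert⟩⟩ := hG
  have hqbounds : p ≤ q ∧ q + 3 ≤ 2 * p ∧ 2 * p ≤ q + 4 := by
    rcases hqval with h | h <;> omega
  have hfinj : Function.Injective f := fun a b h =>
    hbij.injOn (Set.mem_univ a) (Set.mem_univ b) h
  have hNV : Nonempty V := Fintype.card_pos_iff.mp (by omega)
  -- vertex labels are a bijection onto [1, p]
  have hvsurj : ∀ a, 1 ≤ a → a ≤ p → ∃ u, f (Sum.inl u) = a := by
    intro a h1 h2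
    have hinjv : Function.Injective (fun u : V => f (Sum.inl u)) :=
      hfinj.comp Sum.inl_injective
    have himg : (Finset.univ.image (fun u : V => f (Sum.inl u)))
        = Finset.Icc 1 p := by
      apply Finset.eq_of_subset_of_card_le
      · intro x hx
        simp only [Finset.mem_image, Finset.mem_univ, true_and] at hx
        obtain ⟨u, rfl⟩ := hx
        have := hvert u
        rw [Set.mem_Icc] at this
        exact Finset.mem_Icc.mpr this
      · rw [Finset.card_image_of_injective _ hinjv, Finset.card_univ,
          Nat.card_Icc]
        omega
    have : a ∈ Finset.univ.image (fun u : V => f (Sum.inl u)) := by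
      rw [himg]; exact Finset.mem_Icc.mpr ⟨h1, h2⟩
    simp only [Finset.mem_image, Finset.mem_univ, true_and] at this
    exact this
  -- edge labels are at least p + 1
  have hedge_lb : ∀ e : G.edgeSet, p + 1 ≤ f (Sum.inr e) := by
    intro e
    by_contra h
    push_neg at h
    have hmem := hbij.mapsTo (Set.mem_univ (Sum.inr e))
    rw [Set.mem_Icc] at hmem
    obtain ⟨u, hu⟩ := hvsurj (f (Sum.inr e)) hmem.1 (by omega)
    exact absurd (hfinj hu) (by simp)
  -- every label in [p+1, p+q] is attained by an edge
  have hedgesurj : ∀ j, p + 1 ≤ j → j ≤ p + q →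
      ∃ e : G.edgeSet, f (Sum.inr e) = j := by
    intro j h1 h2
    obtain ⟨x, -, hx⟩ := hbij.surjOn (Set.mem_Icc.mpr ⟨by omega, h2⟩)
    cases x with
    | inl u =>
      have := hvert u
      rw [Set.mem_Icc] at this
      omega
    | inr e => exact ⟨e, hx⟩
  -- unpacking an edge into adjacent endpoints
  have hmag' : ∀ e : G.edgeSet, ∃ u v, G.Adj u v ∧
      f (Sum.inl u) + f (Sum.inl v) + f (Sum.inr e) = k := by
    rintro ⟨z, hz⟩
    revert hz
    induction z using Sym2.ind with
    | _ u v =>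
      intro hz
      have hadj : G.Adj u v := G.mem_edgeSet.mp hz
      exact ⟨u, v, hadj, hmagic u v hadj⟩
  have hvbounds : ∀ u v : V, G.Adj u v →
      1 ≤ f (Sum.inl u) ∧ f (Sum.inl u) ≤ p ∧ 1 ≤ f (Sum.inl v) ∧
        f (Sum.inl v) ≤ p ∧ f (Sum.inl u) ≠ f (Sum.inl v) := by
    intro u v hadj
    have h1 := hvert u; have h2 := hvert v
    rw [Set.mem_Icc] at h1 h2
    refine ⟨h1.1, h1.2, h2.1, h2.2, fun hh => hadj.ne (Sum.inl_injective (hfinj hh))⟩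
  -- bounds on k
  have hk_lb : p + q + 3 ≤ k := by
    obtain ⟨e, he⟩ := hedgesurj (p + q) (by omega) le_rfl
    obtain ⟨u, v, hadj, hsum⟩ := hmag' e
    have := hvbounds u v hadj
    omega
  have hk_ub : k ≤ 3 * p := by
    obtain ⟨e, he⟩ := hedgesurj (p + 1) le_rfl (by omega)
    obtain ⟨u, v, hadj, hsum⟩ := hmag' e
    have := hvbounds u v hadj
    omega
  -- the inverse labeling function
  have hgex : ∀ a : ℕ, ∃ u : V, 1 ≤ a → a ≤ p → f (Sum.inl u) = a := by
    intro a
    by_cases h : 1 ≤ a ∧ a ≤ p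
    · obtain ⟨u, hu⟩ := hvsurj a h.1 h.2
      exact ⟨u, fun _ _ => hu⟩
    · exact ⟨Classical.arbitrary V, fun h1 h2 => absurd ⟨h1, h2⟩ h⟩
  choose g hg using hgex
  have hginv : ∀ u : V, g (f (Sum.inl u)) = u := by
    intro u
    have h1 := hvert u
    rw [Set.mem_Icc] at h1
    exact Sum.inl_injective (hfinj (hg (f (Sum.inl u)) h1.1 h1.2))
  set A : ℕ → ℕ → Prop := fun a b => G.Adj (g a) (g b) with hA
  -- every achievable sum is realized by an edge on labels
  have hEnum : ∀ s, k ≤ s + p + q → s + p + 1 ≤ k →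
      ∃ a b, 1 ≤ a ∧ a < b ∧ b ≤ p ∧ a + b = s ∧ A a b := by
    intro s h1 h2
    obtain ⟨e, he⟩ := hedgesurj (k - s) (by omega) (by omega)
    obtain ⟨u, v, hadj, hsum⟩ := hmag' e
    rw [he] at hsum
    have hb := hvbounds u v hadj
    have hsum' : f (Sum.inl u) + f (Sum.inl v) = s := by omega
    rcases Nat.lt_or_ge (f (Sum.inl u)) (f (Sum.inl v)) with hlt | hge
    · refine ⟨f (Sum.inl u), f (Sum.inl v), by omega, hlt, by omega, hsum', ?_⟩
      show G.Adj (g (f (Sum.inl u))) (g (f (Sum.inl v)))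
      rw [hginv, hginv]; exact hadj
    · refine ⟨f (Sum.inl v), f (Sum.inl u), by omega, by omega, by omega,
        by omega, ?_⟩
      show G.Adj (g (f (Sum.inl v))) (g (f (Sum.inl u)))
      rw [hginv, hginv]; exact hadj.symm
  by_cases hk : k ≤ p + q + 3
  · -- sums cover [3, p+2]
    obtain ⟨a, b, c, h1, h2, h3⟩ := core_tri p hp4 A
      (fun s hs1 hs2 => hEnum s (by omega) (by omega))
    exact ⟨g a, g b, g c, h1, h2, h3⟩
  · -- k = 3p and q = 2p - 4; sums cover [p, 2p-1]; reflect
    have hk3 : k = 3 * p ∧ q + 4 = 2 * p := by omega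
    set A' : ℕ → ℕ → Prop := fun a b => A (p + 1 - a) (p + 1 - b) with hA'
    have hE' : ∀ s, 3 ≤ s → s ≤ p + 2 →
        ∃ a b, 1 ≤ a ∧ a < b ∧ b ≤ p ∧ a + b = s ∧ A' a b := by
      intro s hs1 hs2
      obtain ⟨a, b, ha, hab, hbp, hsum, hAab⟩ :=
        hEnum (2 * p + 2 - s) (by omega) (by omega)
      refine ⟨p + 1 - b, p + 1 - a, by omega, by omega, by omega, by omega, ?_⟩
      show A (p + 1 - (p + 1 - b)) (p + 1 - (p + 1 - a))
      have e1 : p + 1 - (p + 1 - b) = b := by omega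
      have e2 : p + 1 - (p + 1 - a) = a := by omega
      rw [e1, e2]
      exact G.adj_symm hAab
    obtain ⟨a, b, c, h1, h2, h3⟩ := core_tri p hp4 A' hE'
    exact ⟨g (p + 1 - a), g (p + 1 - b), g (p + 1 - c), h1, h2, h3⟩
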